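/- Let C ⊆ F_2^n be a self-dual binary code (C = C^⊥ with respect to the standard bilinear form), and suppose C has a generator decomposition with respect to a split of the coordinates into a block of size c and a block of size f: let C_1 be the subcode of codewords supported on the first c coordinates (with dimension k_1 as a code of length c) and C_2 the subcode supported on the last f coordinates (with dimension k_2). Then k_1 − c/2 = k_2 − f/2 (Balance Principle); equivalently 2k_1 + f = 2k_2 + c. -/

import Mathlib

open LinearMap Module Submodule

section BalanceAux

variable (c f : ℕ)

private noncomputable def balB : LinearMap.BilinForm (ZMod 2) (Fin (c + f) → ZMod 2) :=
  Matrix.toBilin' (1 : Matrix (Fin (c + f)) (Fin (c + f)) (ZMod 2))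

private lemma balB_apply (x y : Fin (c + f) → ZMod 2) :
    balB c f x y = ∑ i, x i * y i := by
  simp [balB, Matrix.toBilin'_apply', dotProduct]

private lemma balB_nondeg : (balB c f).Nondegenerate := by
  apply Matrix.Nondegenerate.toBilin'
  rw [Matrix.nondegenerate_iff_det_ne_zero]
  simp

private lemma balB_refl : (balB c f).IsRefl := by
  intro x y h
  rw [balB_apply] at h ⊢
  simpa [mul_comm] using h

end BalanceAux

/-- Balance principle: if `C ⊆ F₂^(c+f)` is self-dual, `C₁` is the subcode of words
supported on the first `c` coordinates (dimension `k₁`) and `C₂` the subcode supported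
on the last `f` coordinates (dimension `k₂`), then `2k₁ + f = 2k₂ + c`
(equivalently `k₁ − c/2 = k₂ − f/2`). -/
theorem stmt_14 (c f : ℕ) (C : Submodule (ZMod 2) (Fin (c + f) → ZMod 2))
    (hsd : ∀ x, x ∈ C ↔ ∀ y ∈ C, ∑ i, x i * y i = 0) :
    2 * Module.finrank (ZMod 2)
        ↥(C ⊓ LinearMap.ker (LinearMap.funLeft (ZMod 2) (ZMod 2)
            (Subtype.val : {i : Fin (c + f) // c ≤ (i : ℕ)} → Fin (c + f)))) + f
    = 2 * Module.finrank (ZMod 2)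
        ↥(C ⊓ LinearMap.ker (LinearMap.funLeft (ZMod 2) (ZMod 2)
            (Subtype.val : {i : Fin (c + f) // (i : ℕ) < c} → Fin (c + f)))) + c := by
  classical
  set B := balB c f with hB
  set K₁ := LinearMap.ker (LinearMap.funLeft (ZMod 2) (ZMod 2)
      (Subtype.val : {i : Fin (c + f) // c ≤ (i : ℕ)} → Fin (c + f))) with hK₁
  set K₂ := LinearMap.ker (LinearMap.funLeft (ZMod 2) (ZMod 2)
      (Subtype.val : {i : Fin (c + f) // (i : ℕ) < c} → Fin (c + f))) with hK₂
  have memK₁ : ∀ x : Fin (c + f) → ZMod 2, x ∈ K₁ ↔ ∀ i : Fin (c + f), c ≤ (i : ℕ) → x i = 0 := by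
    intro x
    simp only [hK₁, LinearMap.mem_ker, LinearMap.funLeft_apply]
    constructor
    · intro h i hi
      exact congrFun h ⟨i, hi⟩
    · intro h
      funext j
      exact h j.1 j.2
  have memK₂ : ∀ x : Fin (c + f) → ZMod 2, x ∈ K₂ ↔ ∀ i : Fin (c + f), (i : ℕ) < c → x i = 0 := by
    intro x
    simp only [hK₂, LinearMap.mem_ker, LinearMap.funLeft_apply]
    constructor
    · intro h i hi
      exact congrFun h ⟨i, hi⟩
    · intro h
      funext j
      exact h j.1 j.2
  -- C is self-orthogonal
  have hCorth : B.orthogonal C = C := by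
    ext x
    rw [LinearMap.BilinForm.mem_orthogonal_iff, hsd x]
    constructor
    · intro h y hy
      have := h y hy
      rw [balB_apply] at this
      calc ∑ i, x i * y i = ∑ i, y i * x i := by simp [mul_comm]
        _ = 0 := this
    · intro h y hy
      rw [balB_apply]
      calc ∑ i, y i * x i = ∑ i, x i * y i := by simp [mul_comm]
        _ = 0 := h y hy
  -- K₁ is the orthogonal of K₂
  have hK₁orth : B.orthogonal K₂ = K₁ := by
    ext x
    rw [LinearMap.BilinForm.mem_orthogonal_iff, memK₁]
    constructor
    · intro h i hi
      have hs : Pi.single i (1 : ZMod 2) ∈ K₂ := by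
        rw [memK₂]
        intro j hj
        have : j ≠ i := by
          intro hji; rw [hji] at hj; omega
        simp [Pi.single_apply, this]
      have := h _ hs
      rw [balB_apply] at this
      simpa [Pi.single_apply] using this
    · intro h y hy
      rw [balB_apply]
      apply Finset.sum_eq_zero
      intro i _
      rcases lt_or_ge (i : ℕ) c with hi | hi
      · rw [(memK₂ y).1 hy i hi, zero_mul]
      · rw [h i hi, mul_zero]
  -- orthogonal of a sup is the inf of the orthogonals
  have horthsup : B.orthogonal (C ⊔ K₂) = B.orthogonal C ⊓ B.orthogonal K₂ := by
    apply le_antisymm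
    · exact le_inf (LinearMap.BilinForm.orthogonal_le le_sup_left)
        (LinearMap.BilinForm.orthogonal_le le_sup_right)
    · intro x hx
      rw [LinearMap.BilinForm.mem_orthogonal_iff]
      intro y hy
      rcases Submodule.mem_sup.1 hy with ⟨u, hu, v, hv, rfl⟩
      have h1 : B.IsOrtho u x := hx.1 u hu
      have h2 : B.IsOrtho v x := hx.2 v hv
      rw [LinearMap.BilinForm.isOrtho_def] at h1 h2
      rw [map_add, LinearMap.add_apply, h1, h2, add_zero]
  have hCK₁ : C ⊓ K₁ = B.orthogonal (C ⊔ K₂) := by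
    rw [horthsup, hCorth, hK₁orth]
  -- dimension facts
  have hfinC : 2 * finrank (ZMod 2) C = c + f := by
    have h1 := LinearMap.BilinForm.finrank_orthogonal (balB_nondeg c f) C
    rw [← hB, hCorth] at h1
    have h2 : finrank (ZMod 2) C ≤ finrank (ZMod 2) (Fin (c + f) → ZMod 2) :=
      Submodule.finrank_le C
    rw [Module.finrank_pi, Fintype.card_fin] at h1 h2
    omega
  have hcardK₂ : finrank (ZMod 2) K₂ = f := by
    have hsurj : Function.Surjective (LinearMap.funLeft (ZMod 2) (ZMod 2)
        (Subtype.val : {i : Fin (c + f) // (i : ℕ) < c} → Fin (c + f))) :=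
      LinearMap.funLeft_surjective_of_injective _ _ _ Subtype.val_injective
    have hrn := LinearMap.finrank_range_add_finrank_ker (LinearMap.funLeft (ZMod 2) (ZMod 2)
        (Subtype.val : {i : Fin (c + f) // (i : ℕ) < c} → Fin (c + f)))
    rw [LinearMap.range_eq_top.2 hsurj, finrank_top] at hrn
    have hcard : Fintype.card {i : Fin (c + f) // (i : ℕ) < c} = c := by
      have e : {i : Fin (c + f) // (i : ℕ) < c} ≃ Fin c :=
        { toFun := fun i => ⟨i.1, i.2⟩
          invFun := fun j => ⟨⟨j.1, lt_of_lt_of_le j.2 (Nat.le_add_right c f)⟩, j.2⟩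
          left_inv := fun i => rfl
          right_inv := fun j => rfl }
      rw [Fintype.card_congr e, Fintype.card_fin]
    rw [Module.finrank_pi, Module.finrank_pi, Fintype.card_fin, hcard] at hrn
    rw [hK₂]
    omega
  have hk₁ := LinearMap.BilinForm.finrank_orthogonal (balB_nondeg c f) (C ⊔ K₂)
  rw [← hB, ← hCK₁] at hk₁
  have hsupinf := Submodule.finrank_sup_add_finrank_inf_eq C K₂
  have hsle : finrank (ZMod 2) ↥(C ⊔ K₂) ≤ finrank (ZMod 2) (Fin (c + f) → ZMod 2) :=
    Submodule.finrank_le _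
  rw [Module.finrank_pi, Fintype.card_fin] at hk₁ hsle
  omega
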